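/- Let Ω ⊆ ℝⁿ be a bounded open set, V : ℝⁿ → ℝⁿ a continuously differentiable Lipschitz vector field, and f : ℝⁿ → ℝ a continuously differentiable function with compact support. For s ∈ ℝ set T_s = Id + sV and J(s) = ∫_{T_s(Ω)} f(x) dx. Then J is differentiable at s = 0 and J′(0) = ∫_Ω (∇f(x)·V(x) + f(x) div V(x)) dx, i.e. J′(0) = ∫_Ω div(fV)(x) dx. -/

import Mathlib

open MeasureTheory Metric
open scoped NNReal

section Aux

variable {n : ℕ}

private lemma clm_det_eq (B : EuclideanSpace ℝ (Fin n) →L[ℝ] EuclideanSpace ℝ (Fin n)) :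
    B.det = ∑ σ : Equiv.Perm (Fin n), ((Equiv.Perm.sign σ : ℤ) : ℝ) *
      ∏ i, B (EuclideanSpace.single i 1) (σ i) := by
  rw [ContinuousLinearMap.det, ← LinearMap.det_toMatrix
    (EuclideanSpace.basisFun (Fin n) ℝ).toBasis, Matrix.det_apply']
  refine Finset.sum_congr rfl fun σ _ => ?_
  refine congrArg _ (Finset.prod_congr rfl fun i _ => ?_)
  simp [LinearMap.toMatrix_apply, EuclideanSpace.basisFun_apply]

private lemma contDiff_clm_det :
    ContDiff ℝ 1 (fun B : EuclideanSpace ℝ (Fin n) →L[ℝ] EuclideanSpace ℝ (Fin n) => B.det) := by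
  have h : (fun B : EuclideanSpace ℝ (Fin n) →L[ℝ] EuclideanSpace ℝ (Fin n) => B.det) = fun B =>
      ∑ σ : Equiv.Perm (Fin n), ((Equiv.Perm.sign σ : ℤ) : ℝ) *
        ∏ i, B (EuclideanSpace.single i 1) (σ i) := funext clm_det_eq
  rw [h]
  apply ContDiff.sum
  intro σ _
  apply ContDiff.mul contDiff_const
  apply contDiff_prod
  intro i _
  exact ((EuclideanSpace.proj (σ i) : EuclideanSpace ℝ (Fin n) →L[ℝ] ℝ).comp
    (ContinuousLinearMap.apply ℝ (EuclideanSpace ℝ (Fin n))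
      (EuclideanSpace.single i 1 : EuclideanSpace ℝ (Fin n)))).contDiff

private lemma contDiff_G :
    ContDiff ℝ 1 (fun p : ℝ × (EuclideanSpace ℝ (Fin n) →L[ℝ] EuclideanSpace ℝ (Fin n)) =>
      (1 + p.1 • p.2).det) :=
  contDiff_clm_det.comp (contDiff_const.add (contDiff_fst.smul contDiff_snd))

set_option maxHeartbeats 1000000 in
private lemma exists_unif_lip (r : ℝ) :
    ∃ K : ℝ≥0, ∀ B : EuclideanSpace ℝ (Fin n) →L[ℝ] EuclideanSpace ℝ (Fin n), ‖B‖ ≤ r →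
      LipschitzOnWith K (fun s : ℝ => (1 + s • B).det) (closedBall (0:ℝ) r) := by
  set G := fun p : ℝ × (EuclideanSpace ℝ (Fin n) →L[ℝ] EuclideanSpace ℝ (Fin n)) =>
      (1 + p.1 • p.2).det with hG
  have hGc : ContDiff ℝ 1 G := contDiff_G
  have hfc : Continuous (fderiv ℝ G) := hGc.continuous_fderiv one_ne_zero
  obtain ⟨C, hC⟩ := (isCompact_closedBall (0 : ℝ × (EuclideanSpace ℝ (Fin n) →L[ℝ]
    EuclideanSpace ℝ (Fin n))) r).exists_bound_of_continuousOn (f := fderiv ℝ G) hfc.continuousOn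
  refine ⟨⟨max C 0, le_max_right _ _⟩, fun B hB => ?_⟩
  have hlip : LipschitzOnWith ⟨max C 0, le_max_right _ _⟩ G (closedBall 0 r) := by
    apply Convex.lipschitzOnWith_of_nnnorm_fderiv_le (fun p _ => hGc.differentiable one_ne_zero p)
      (fun p hp => ?_) (convex_closedBall _ _)
    have := hC p hp
    change ((‖fderiv ℝ G p‖₊ : ℝ≥0) : ℝ) ≤ max C 0
    rw [coe_nnnorm]
    exact this.trans (le_max_left _ _)
  intro s hs t ht
  have hmem : ∀ u : ℝ, u ∈ closedBall (0:ℝ) r →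
      (u, B) ∈ closedBall (0 : ℝ × (EuclideanSpace ℝ (Fin n) →L[ℝ]
        EuclideanSpace ℝ (Fin n))) r := by
    intro u hu
    rw [mem_closedBall_zero_iff, Prod.norm_def]
    rw [mem_closedBall_zero_iff] at hu
    exact max_le hu hB
  have hle := hlip (hmem s hs) (hmem t ht)
  refine le_trans hle ?_
  gcongr
  simp only [edist_dist, Prod.dist_eq, dist_self]
  rw [max_eq_left dist_nonneg]

private lemma hasDerivAt_det_one_add_smul
    (B : EuclideanSpace ℝ (Fin n) →L[ℝ] EuclideanSpace ℝ (Fin n)) :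
    HasDerivAt (fun s : ℝ => (1 + s • B).det)
      (LinearMap.trace ℝ (EuclideanSpace ℝ (Fin n)) B.toLinearMap) 0 := by
  set b := (EuclideanSpace.basisFun (Fin n) ℝ).toBasis with hb
  set M := LinearMap.toMatrix b b B.toLinearMap with hM
  set q := ((1 + (Polynomial.X : Polynomial ℝ) • M.map Polynomial.C).det).divX.divX with hq
  have key : ∀ s : ℝ, (1 + s • B).det
      = 1 + Matrix.trace M * s + Polynomial.eval s q * s ^ 2 := by
    intro s
    have h1 : ((1 + s • B : _ →L[ℝ] _) : _ →ₗ[ℝ] _) = 1 + s • B.toLinearMap := by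
      ext x; simp
    rw [ContinuousLinearMap.det, h1, ← LinearMap.det_toMatrix b, map_add,
      LinearMap.toMatrix_one, _root_.map_smul, ← hM, Matrix.det_one_add_smul, hq]
  have h2 : HasDerivAt (fun s : ℝ => 1 + Matrix.trace M * s + Polynomial.eval s q * s ^ 2)
      (Matrix.trace M) 0 := by
    have ha : HasDerivAt (fun s : ℝ => 1 + Matrix.trace M * s) (Matrix.trace M) 0 := by
      simpa using ((hasDerivAt_id (0:ℝ)).const_mul (Matrix.trace M)).const_add 1
    have hbb : HasDerivAt (fun s : ℝ => Polynomial.eval s q * s ^ 2)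
        (Polynomial.eval 0 (Polynomial.derivative q) * 0 ^ 2
          + Polynomial.eval 0 q * (2 * 0 ^ 1)) 0 :=
      (q.hasDerivAt 0).mul (by simpa using hasDerivAt_pow 2 (0:ℝ))
    have h := ha.add hbb
    simp at h
    exact h
  have h3 : Matrix.trace M = LinearMap.trace ℝ (EuclideanSpace ℝ (Fin n)) B.toLinearMap :=
    (LinearMap.trace_eq_matrix_trace ℝ b B.toLinearMap).symm
  rw [← h3]
  simpa [← funext key] using h2

private lemma clm_det_one :
    ((1 : EuclideanSpace ℝ (Fin n) →L[ℝ] EuclideanSpace ℝ (Fin n))).det = 1 := by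
  rw [ContinuousLinearMap.det, ContinuousLinearMap.one_def, ContinuousLinearMap.coe_id,
    LinearMap.det_id]

end Aux

set_option maxHeartbeats 4000000 in
/-- Hadamard differentiation formula for domain integrals: for a bounded open `Ω ⊆ ℝⁿ`,
a `C¹` Lipschitz vector field `V` and a compactly supported `C¹` function `f`, the map
`s ↦ ∫_{(Id + sV)(Ω)} f` is differentiable at `s = 0` with derivative
`∫_Ω (∇f · V + f · div V) = ∫_Ω div (f V)`. -/
theorem hasDerivAt_integral_perturbed_domain
    {n : ℕ} (Ω : Set (EuclideanSpace ℝ (Fin n)))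
    (hΩ_open : IsOpen Ω) (hΩ_bdd : Bornology.IsBounded Ω)
    (V : EuclideanSpace ℝ (Fin n) → EuclideanSpace ℝ (Fin n))
    (hV : ContDiff ℝ 1 V) (L : ℝ≥0) (hVlip : LipschitzWith L V)
    (f : EuclideanSpace ℝ (Fin n) → ℝ) (hf : ContDiff ℝ 1 f)
    (hsupp : HasCompactSupport f) :
    HasDerivAt (fun s : ℝ => ∫ x in (fun x => x + s • V x) '' Ω, f x)
      (∫ x in Ω, (fderiv ℝ f x (V x) +
        f x * LinearMap.trace ℝ (EuclideanSpace ℝ (Fin n)) (fderiv ℝ V x).toLinearMap))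
      0 := by
  classical
  -- the radius for the uniform Lipschitz bound on determinants
  set r : ℝ := (L : ℝ) + 1 with hr
  obtain ⟨K, hK⟩ := exists_unif_lip (n := n) r
  -- ε for the perturbation parameter
  set ε : ℝ := 1 / ((L : ℝ) + 1) with hε
  have hεpos : 0 < ε := by positivity
  have hεr : ε ≤ r := by
    rw [hε, hr]
    rw [div_le_iff₀ (by positivity)]
    nlinarith [L.coe_nonneg]
  have hεL : ∀ s : ℝ, |s| < ε → |s| * (L : ℝ) < 1 := by
    intro s hs
    rcases eq_or_lt_of_le (L.coe_nonneg) with h0 | h0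
    · rw [← h0]; norm_num
    · calc |s| * (L : ℝ) < ε * L := by gcongr
        _ < 1 := by
          rw [hε, div_mul_eq_mul_div, div_lt_one (by positivity)]
          nlinarith
  have hBL : ∀ x : EuclideanSpace ℝ (Fin n), ‖fderiv ℝ V x‖ ≤ (L : ℝ) := fun x =>
    norm_fderiv_le_of_lipschitz ℝ hVlip
  -- Step A : for |s| < ε the two integrals agree
  have stepA : ∀ s : ℝ, |s| < ε →
      ∫ x in (fun x => x + s • V x) '' Ω, f x
        = ∫ x in Ω, |(1 + s • fderiv ℝ V x).det| * f (x + s • V x) := by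
    intro s hs
    have hderiv : ∀ x ∈ Ω, HasFDerivWithinAt (fun x : EuclideanSpace ℝ (Fin n) => x + s • V x)
        (1 + s • fderiv ℝ V x) Ω x := by
      intro x _
      have h1 : HasFDerivAt (fun x : EuclideanSpace ℝ (Fin n) => x + s • V x)
          (ContinuousLinearMap.id ℝ (EuclideanSpace ℝ (Fin n)) + s • fderiv ℝ V x) x :=
        (hasFDerivAt_id x).add ((hV.differentiable one_ne_zero x).hasFDerivAt.const_smul s)
      rw [← ContinuousLinearMap.one_def] at h1
      exact h1.hasFDerivWithinAt
    have hinj : Set.InjOn (fun x : EuclideanSpace ℝ (Fin n) => x + s • V x) Ω := by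
      intro x _ y _ hxy
      by_contra hne
      simp only at hxy
      have h1 : x - y = s • V y - s • V x :=
        sub_eq_sub_iff_add_eq_add.2 (hxy.trans (add_comm _ _))
      have h2 : ‖x - y‖ ≤ |s| * ((L : ℝ) * ‖x - y‖) := by
        calc ‖x - y‖ = ‖s • (V y - V x)‖ := by rw [h1, smul_sub]
          _ = |s| * ‖V y - V x‖ := by rw [norm_smul, Real.norm_eq_abs]
          _ ≤ |s| * ((L : ℝ) * ‖x - y‖) := by
              gcongr
              have := hVlip.dist_le_mul y x
              rw [dist_eq_norm, dist_eq_norm] at this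
              rwa [norm_sub_rev x y]
      have h3 : |s| * (L : ℝ) < 1 := hεL s hs
      have h4 : 0 < ‖x - y‖ := by
        rw [norm_pos_iff, sub_ne_zero]
        exact hne
      nlinarith
    have := integral_image_eq_integral_abs_det_fderiv_smul volume hΩ_open.measurableSet
      hderiv hinj f
    rw [this]
    refine setIntegral_congr_fun hΩ_open.measurableSet fun x _ => ?_
    simp [smul_eq_mul]
  -- bounds
  obtain ⟨R, hR⟩ := hΩ_bdd.subset_closedBall 0
  set Mv : ℝ≥0 := L * R.toNNReal + ‖V 0‖₊ with hMv
  have hMvb : ∀ x ∈ Ω, ‖V x‖ ≤ (Mv : ℝ) := by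
    intro x hx
    have hxR : ‖x‖ ≤ R := by simpa using hR hx
    have h1 : ‖V x - V 0‖ ≤ (L : ℝ) * ‖x‖ := by
      simpa [dist_eq_norm] using hVlip.dist_le_mul x 0
    have h2 : ‖V x‖ ≤ ‖V x - V 0‖ + ‖V 0‖ := by
      simpa using norm_add_le (V x - V 0) (V 0)
    have h3 : (L : ℝ) * ‖x‖ ≤ (L : ℝ) * R := by gcongr
    have h4 : (R : ℝ) ≤ (R.toNNReal : ℝ) := Real.le_coe_toNNReal R
    have h5 : (L : ℝ) * R ≤ (L : ℝ) * R.toNNReal := by gcongr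
    simp only [hMv, NNReal.coe_add, NNReal.coe_mul, coe_nnnorm]
    linarith
  obtain ⟨Cf, hCf⟩ := hsupp.exists_bound_of_continuous hf.continuous
  set Mf : ℝ≥0 := Real.toNNReal Cf with hMf
  have hMfb : ∀ x : EuclideanSpace ℝ (Fin n), |f x| ≤ (Mf : ℝ) := fun x => by
    rw [← Real.norm_eq_abs]
    exact (hCf x).trans (Real.le_coe_toNNReal Cf)
  obtain ⟨Cf', hCf'⟩ := (hsupp.fderiv ℝ).exists_bound_of_continuous
    (hf.continuous_fderiv one_ne_zero)
  set Mf' : ℝ≥0 := Real.toNNReal Cf' with hMf'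
  have hMf'b : ∀ x : EuclideanSpace ℝ (Fin n), ‖fderiv ℝ f x‖₊ ≤ Mf' := fun x => by
    rw [← NNReal.coe_le_coe, coe_nnnorm]
    exact (hCf' x).trans (Real.le_coe_toNNReal Cf')
  have hflip : LipschitzWith Mf' f :=
    lipschitzWith_of_nnnorm_fderiv_le (hf.differentiable one_ne_zero) hMf'b
  -- D bound on determinants
  have hrpos : (0:ℝ) < r := by positivity
  set D : ℝ≥0 := 1 + K * ⟨r, hrpos.le⟩ with hD
  have hdetD : ∀ x : EuclideanSpace ℝ (Fin n), ∀ s ∈ closedBall (0:ℝ) r,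
      |(1 + s • fderiv ℝ V x).det| ≤ (D : ℝ) := by
    intro x s hs
    have hmem0 : (0:ℝ) ∈ closedBall (0:ℝ) r := mem_closedBall_self hrpos.le
    have hd := (hK (fderiv ℝ V x) ((hBL x).trans (by rw [hr]; linarith))).dist_le_mul s hs 0 hmem0
    have h0 : (1 + (0:ℝ) • fderiv ℝ V x).det = 1 := by
      rw [zero_smul ℝ (fderiv ℝ V x), add_zero, clm_det_one]
    rw [h0] at hd
    have hsr : |s| ≤ r := by simpa [Real.dist_eq] using hs
    have h1 : |(1 + s • fderiv ℝ V x).det - 1| ≤ (K : ℝ) * r := by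
      rw [Real.dist_eq] at hd
      refine hd.trans ?_
      gcongr
      simpa [Real.dist_eq] using hsr
    calc |(1 + s • fderiv ℝ V x).det| ≤ |(1 + s • fderiv ℝ V x).det - 1| + 1 := by
          have := abs_add_le ((1 + s • fderiv ℝ V x).det - 1) 1
          simpa using this
      _ ≤ (K : ℝ) * r + 1 := by linarith
      _ = (D : ℝ) := by simp [hD]; exact add_comm _ _
  -- the uniform Lipschitz constant for the parameter s
  set c : ℝ≥0 := D * (Mf' * Mv) + Mf * K with hc
  -- continuity facts
  have hfdV : Continuous (fderiv ℝ V) := hV.continuous_fderiv one_ne_zero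
  have hVc : Continuous V := hV.continuous
  have hfc : Continuous f := hf.continuous
  have μfin : volume.restrict Ω Set.univ < ⊤ := by
    rw [Measure.restrict_apply_univ]
    exact hΩ_bdd.measure_lt_top
  -- Step B : differentiate under the integral sign
  have hF_meas : ∀ᶠ s in nhds (0:ℝ), AEStronglyMeasurable
      (fun x => |(1 + s • fderiv ℝ V x).det| * f (x + s • V x)) (volume.restrict Ω) := by
    refine Filter.Eventually.of_forall fun s => ?_
    have hcont : Continuous (fun x => |(1 + s • fderiv ℝ V x).det| * f (x + s • V x)) := by
      apply Continuous.mul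
      · exact (ContinuousLinearMap.continuous_det.comp
          (continuous_const.add (hfdV.const_smul s))).abs
      · exact hfc.comp (continuous_id.add (hVc.const_smul s))
    exact hcont.aestronglyMeasurable
  have hF_int : Integrable (fun x => |(1 + (0:ℝ) • fderiv ℝ V x).det| * f (x + (0:ℝ) • V x))
      (volume.restrict Ω) := by
    have h1 : (fun x : EuclideanSpace ℝ (Fin n) =>
        |(1 + (0:ℝ) • fderiv ℝ V x).det| * f (x + (0:ℝ) • V x)) = f := by
      funext x
      rw [zero_smul ℝ (fderiv ℝ V x), add_zero, clm_det_one, zero_smul, add_zero, abs_one, one_mul]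
    rw [h1]
    exact (hfc.integrable_of_hasCompactSupport hsupp).integrableOn
  have hF'_meas : AEStronglyMeasurable (fun x => fderiv ℝ f x (V x) +
      f x * LinearMap.trace ℝ (EuclideanSpace ℝ (Fin n)) (fderiv ℝ V x).toLinearMap)
      (volume.restrict Ω) := by
    have htr : Continuous fun x : EuclideanSpace ℝ (Fin n) =>
        LinearMap.trace ℝ (EuclideanSpace ℝ (Fin n)) (fderiv ℝ V x).toLinearMap := by
      have hT : Continuous fun B : EuclideanSpace ℝ (Fin n) →L[ℝ] EuclideanSpace ℝ (Fin n) =>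
          LinearMap.trace ℝ (EuclideanSpace ℝ (Fin n)) B.toLinearMap :=
        LinearMap.continuous_of_finiteDimensional
          ((LinearMap.trace ℝ (EuclideanSpace ℝ (Fin n))).comp (ContinuousLinearMap.coeLM ℝ))
      exact hT.comp hfdV
    have hcont : Continuous (fun x => fderiv ℝ f x (V x) +
        f x * LinearMap.trace ℝ (EuclideanSpace ℝ (Fin n)) (fderiv ℝ V x).toLinearMap) :=
      ((hf.continuous_fderiv one_ne_zero).clm_apply hVc).add (hfc.mul htr)
    exact hcont.aestronglyMeasurable
  have h_lip : ∀ᵐ x ∂(volume.restrict Ω), LipschitzOnWith (Real.nnabs ((c:ℝ)))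
      (fun s => |(1 + s • fderiv ℝ V x).det| * f (x + s • V x)) (ball (0:ℝ) ε) := by
    rw [ae_restrict_iff' hΩ_open.measurableSet]
    refine Filter.Eventually.of_forall fun x hx => ?_
    rw [Real.nnabs_coe, lipschitzOnWith_iff_dist_le_mul]
    intro s hs t ht
    have hsr : s ∈ closedBall (0:ℝ) r := closedBall_subset_closedBall hεr
      (ball_subset_closedBall hs)
    have htr2 : t ∈ closedBall (0:ℝ) r := closedBall_subset_closedBall hεr
      (ball_subset_closedBall ht)
    set dd : ℝ → ℝ := fun u => |(1 + u • fderiv ℝ V x).det| with hdd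
    set gg : ℝ → ℝ := fun u => f (x + u • V x) with hgg
    have hdlip : dist (dd s) (dd t) ≤ (K : ℝ) * dist s t := by
      have h1 := (hK (fderiv ℝ V x) ((hBL x).trans (by rw [hr]; linarith))).dist_le_mul
        s hsr t htr2
      calc dist (dd s) (dd t) ≤ dist ((1 + s • fderiv ℝ V x).det)
            ((1 + t • fderiv ℝ V x).det) := by
            rw [Real.dist_eq, Real.dist_eq]
            exact abs_abs_sub_abs_le_abs_sub _ _
        _ ≤ (K : ℝ) * dist s t := h1
    have hglip : dist (gg s) (gg t) ≤ (Mf' : ℝ) * ((Mv : ℝ) * dist s t) := by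
      have h1 : dist (x + s • V x) (x + t • V x) = dist s t * ‖V x‖ := by
        rw [dist_eq_norm, dist_eq_norm]
        simp only [add_sub_add_left_eq_sub, ← sub_smul, norm_smul, Real.norm_eq_abs]
      calc dist (gg s) (gg t) ≤ (Mf' : ℝ) * dist (x + s • V x) (x + t • V x) :=
            hflip.dist_le_mul _ _
        _ = (Mf' : ℝ) * (dist s t * ‖V x‖) := by rw [h1]
        _ ≤ (Mf' : ℝ) * ((Mv : ℝ) * dist s t) := by
            rw [mul_comm (dist s t)]
            gcongr
            exact hMvb x hx
    have hdb : dd s ≤ (D : ℝ) := hdetD x s hsr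
    have hgb : |gg t| ≤ (Mf : ℝ) := hMfb _
    have hdd0 : 0 ≤ dd s := abs_nonneg _
    have key : |dd s * gg s - dd t * gg t| ≤ dd s * |gg s - gg t| + |gg t| * |dd s - dd t| := by
      have e : dd s * gg s - dd t * gg t = dd s * (gg s - gg t) + (dd s - dd t) * gg t := by
        ring
      rw [e]
      calc |dd s * (gg s - gg t) + (dd s - dd t) * gg t|
          ≤ |dd s * (gg s - gg t)| + |(dd s - dd t) * gg t| := abs_add_le _ _
        _ = dd s * |gg s - gg t| + |gg t| * |dd s - dd t| := by
            rw [abs_mul, abs_mul, abs_of_nonneg hdd0]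
            ring
    rw [Real.dist_eq]
    have h1 : |gg s - gg t| = dist (gg s) (gg t) := (Real.dist_eq _ _).symm
    have h2 : |dd s - dd t| = dist (dd s) (dd t) := (Real.dist_eq _ _).symm
    have t1 : dd s * |gg s - gg t| ≤ (D:ℝ) * ((Mf':ℝ) * ((Mv:ℝ) * dist s t)) := by
      rw [h1]
      exact mul_le_mul hdb hglip dist_nonneg D.coe_nonneg
    have t2 : |gg t| * |dd s - dd t| ≤ (Mf:ℝ) * ((K:ℝ) * dist s t) := by
      rw [h2]
      exact mul_le_mul hgb hdlip dist_nonneg Mf.coe_nonneg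
    have hfin : |dd s * gg s - dd t * gg t|
        ≤ (D:ℝ) * ((Mf':ℝ) * ((Mv:ℝ) * dist s t)) + (Mf:ℝ) * ((K:ℝ) * dist s t) := by
      linarith
    refine hfin.trans (le_of_eq ?_)
    simp only [hc, NNReal.coe_add, NNReal.coe_mul]
    ring
  have hbound_int : Integrable (fun _ : EuclideanSpace ℝ (Fin n) => (c : ℝ))
      (volume.restrict Ω) :=
    integrable_const_iff.2 (Or.inr ⟨μfin⟩)
  have h_diff : ∀ᵐ x ∂(volume.restrict Ω),
      HasDerivAt (fun s : ℝ => |(1 + s • fderiv ℝ V x).det| * f (x + s • V x))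
        (fderiv ℝ f x (V x) +
          f x * LinearMap.trace ℝ (EuclideanSpace ℝ (Fin n)) (fderiv ℝ V x).toLinearMap) 0 := by
    refine Filter.Eventually.of_forall fun x => ?_
    have hdet := hasDerivAt_det_one_add_smul (n := n) (fderiv ℝ V x)
    have h0 : (1 + (0:ℝ) • fderiv ℝ V x).det = 1 := by
      rw [zero_smul ℝ (fderiv ℝ V x), add_zero, clm_det_one]
    have hpos : ∀ᶠ s in nhds (0:ℝ), 0 < (1 + s • fderiv ℝ V x).det := by
      have h1 := hdet.continuousAt.eventually (p := fun y : ℝ => 0 < y) ?_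
      · exact h1
      · show ∀ᶠ y in nhds ((1 + (0:ℝ) • fderiv ℝ V x).det), 0 < y
        rw [h0]
        exact eventually_gt_nhds one_pos
    have hdabs : HasDerivAt (fun s : ℝ => |(1 + s • fderiv ℝ V x).det|)
        (LinearMap.trace ℝ (EuclideanSpace ℝ (Fin n)) (fderiv ℝ V x).toLinearMap) 0 :=
      hdet.congr_of_eventuallyEq (hpos.mono fun s hs => abs_of_pos hs)
    have hinner : HasDerivAt (fun s : ℝ => x + s • V x) (V x) 0 := by
      simpa using ((hasDerivAt_id (0:ℝ)).smul_const (V x)).const_add x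
    have hx0 : x + (0:ℝ) • V x = x := by rw [zero_smul, add_zero]
    have hgd : HasDerivAt (fun s : ℝ => f (x + s • V x)) (fderiv ℝ f x (V x)) 0 := by
      have hfd : HasFDerivAt f (fderiv ℝ f (x + (0:ℝ) • V x)) (x + (0:ℝ) • V x) :=
        (hf.differentiable one_ne_zero _).hasFDerivAt
      have h := hfd.comp_hasDerivAt 0 hinner
      rw [hx0] at h
      exact h
    have hprod := hdabs.mul hgd
    rw [hx0, h0] at hprod
    simp only [abs_one, one_mul] at hprod
    exact hprod.congr_deriv (by ring)
  have stepB := (hasDerivAt_integral_of_dominated_loc_of_lip (Metric.ball_mem_nhds (0:ℝ) hεpos) hF_meas hF_int hF'_meas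
    h_lip hbound_int h_diff).2
  refine stepB.congr_of_eventuallyEq ?_
  have hev : ∀ᶠ s in nhds (0:ℝ), |s| < ε := by
    refine Filter.eventually_iff_exists_mem.2 ⟨ball 0 ε, Metric.ball_mem_nhds (0:ℝ) hεpos,
      fun s hs => ?_⟩
    simpa [Real.dist_eq] using hs
  exact hev.mono fun s hs => stepA s hs
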